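/- arXiv:2308.03473 — 2 statements merged into one kernel-verified Lean document; each statement's English description precedes it below -/
import Mathlib

section
/- Let X, Y be square-integrable random variables and F a sub-σ-algebra. Suppose that almost surely |Cov(X,Y | F)| ≤ ε · Var(X|F)^{1/2} · Var(Y|F)^{1/2} for some ε ≥ 0, and that Cov(E[X|F], E[Y|F]) = 0. Then Cov(X,Y) ≤ ε · Var(X)^{1/2} · Var(Y)^{1/2}. -/
open MeasureTheory ProbabilityTheory

/-- Covariance of two real random variables. -/
noncomputable def cov {Ω : Type*} [MeasurableSpace Ω] (μ : Measure Ω) (U V : Ω → ℝ) : ℝ :=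
  ∫ ω, (U ω - ∫ x, U x ∂μ) * (V ω - ∫ x, V x ∂μ) ∂μ

section Aux

variable {Ω : Type*} {mΩ : MeasurableSpace Ω} {μ : Measure Ω} [IsProbabilityMeasure μ]
  {m : MeasurableSpace Ω}

omit [IsProbabilityMeasure μ] in
lemma int_mul_of_L2 {f g : Ω → ℝ} (hf : MemLp f 2 μ) (hg : MemLp g 2 μ) :
    Integrable (fun ω => f ω * g ω) μ := by
  refine ((hf.integrable_sq.add hg.integrable_sq).div_const 2).mono'
    (hf.aestronglyMeasurable.mul hg.aestronglyMeasurable) (Filter.Eventually.of_forall fun ω => ?_)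
  simp only [Pi.add_apply, norm_mul, Real.norm_eq_abs]
  nlinarith [sq_nonneg (|f ω| - |g ω|), sq_abs (f ω), sq_abs (g ω)]

lemma memℒp_condexp_two (hm : m ≤ mΩ) {f : Ω → ℝ} (hf : MemLp f 2 μ) :
    MemLp (μ[f|m]) 2 μ := by
  have h1 : MemLp ((condExpL2 ℝ ℝ hm (hf.toLp f) : Lp ℝ 2 μ) : Ω → ℝ) 2 μ :=
    Lp.memLp _
  have h2 : AEStronglyMeasurable[m] ((condExpL2 ℝ ℝ hm (hf.toLp f) : Lp ℝ 2 μ) : Ω → ℝ) μ :=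
    lpMeas.aestronglyMeasurable _
  have h3 : ∀ s : Set Ω, MeasurableSet[m] s → μ s < ⊤ →
      ∫ x in s, ((condExpL2 ℝ ℝ hm (hf.toLp f) : Lp ℝ 2 μ) : Ω → ℝ) x ∂μ = ∫ x in s, f x ∂μ := by
    intro s hs hμs
    rw [integral_condExpL2_eq (𝕜 := ℝ) hm (hf.toLp f) hs hμs.ne]
    exact integral_congr_ae (ae_restrict_of_ae hf.coeFn_toLp)
  have hae : ((condExpL2 ℝ ℝ hm (hf.toLp f) : Lp ℝ 2 μ) : Ω → ℝ) =ᵐ[μ] μ[f|m] :=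
    ae_eq_condExp_of_forall_setIntegral_eq hm (hf.integrable one_le_two)
      (fun s _ _ => (h1.integrable one_le_two).restrict) h3 h2
  exact h1.ae_eq hae

lemma cov_eq {U V : Ω → ℝ} (hU : Integrable U μ) (hV : Integrable V μ)
    (hUV : Integrable (fun ω => U ω * V ω) μ) :
    @cov Ω mΩ μ U V = (∫ ω, U ω * V ω ∂μ) - (∫ ω, U ω ∂μ) * ∫ ω, V ω ∂μ := by
  have h : ∀ ω, (U ω - ∫ x, U x ∂μ) * (V ω - ∫ x, V x ∂μ)
      = U ω * V ω - (∫ x, U x ∂μ) * V ω - (((∫ x, V x ∂μ) * U ω)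
        - (∫ x, U x ∂μ) * ∫ x, V x ∂μ) := fun ω => by ring
  unfold cov
  simp_rw [h]
  have i1 : Integrable (fun ω => U ω * V ω - (∫ x, U x ∂μ) * V ω) μ := hUV.sub (hV.const_mul _)
  have i2 : Integrable (fun ω => (∫ x, V x ∂μ) * U ω - (∫ x, U x ∂μ) * ∫ x, V x ∂μ) μ :=
    (hU.const_mul _).sub (integrable_const _)
  rw [integral_sub i1 i2, integral_sub hUV (hV.const_mul _),
    integral_sub (hU.const_mul _) (integrable_const _),
    integral_const_mul, integral_const_mul, integral_const]
  simp [measure_univ]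
  ring

lemma ortho (hm : m ≤ mΩ) {f Z : Ω → ℝ} (hf : MemLp f 2 μ)
    (hZm : StronglyMeasurable[m] Z) (hZ : MemLp Z 2 μ) :
    ∫ ω, Z ω * (f ω - (μ[f|m]) ω) ∂μ = 0 := by
  haveI : SigmaFinite (μ.trim hm) := by
    have : IsFiniteMeasure (μ.trim hm) := isFiniteMeasure_trim hm
    infer_instance
  have hEf : MemLp (μ[f|m]) 2 μ := memℒp_condexp_two hm hf
  have hg2 : MemLp (f - μ[f|m]) 2 μ := hf.sub hEf
  have hint : Integrable (Z * (f - μ[f|m])) μ := by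
    have := int_mul_of_L2 hZ hg2
    simpa [Pi.mul_def, Pi.sub_def] using this
  have h1 : μ[Z * (f - μ[f|m])|m] =ᵐ[μ] Z * μ[f - μ[f|m]|m] :=
    condExp_mul_of_stronglyMeasurable_left hZm hint (hg2.integrable one_le_two)
  have h2 : μ[f - μ[f|m]|m] =ᵐ[μ] 0 := by
    have hs := condExp_sub (m := m) (g := μ[f|m]) (hf.integrable one_le_two) integrable_condExp
    have hc : μ[μ[f|m]|m] = μ[f|m] :=
      condExp_of_stronglyMeasurable hm stronglyMeasurable_condExp integrable_condExp
    filter_upwards [hs] with ω hω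
    simp [hω, hc]
  have h3 : μ[Z * (f - μ[f|m])|m] =ᵐ[μ] 0 := by
    filter_upwards [h1, h2] with ω h1ω h2ω
    simp [h1ω, h2ω]
  calc ∫ ω, Z ω * (f ω - (μ[f|m]) ω) ∂μ
      = ∫ ω, (μ[Z * (f - μ[f|m])|m]) ω ∂μ :=
        (integral_condExp (f := Z * (f - μ[f|m])) hm).symm
    _ = 0 := by rw [integral_congr_ae h3]; simp

lemma int_sq_sub_condexp_le (hm : m ≤ mΩ) {f : Ω → ℝ} (hf : MemLp f 2 μ) :
    ∫ ω, (f ω - (μ[f|m]) ω) ^ 2 ∂μ ≤ variance f μ := by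
  haveI : SigmaFinite (μ.trim hm) := by
    have : IsFiniteMeasure (μ.trim hm) := isFiniteMeasure_trim hm
    infer_instance
  have hE2 : MemLp (μ[f|m]) 2 μ := memℒp_condexp_two hm hf
  have iff2 : Integrable (fun ω => f ω * f ω) μ := int_mul_of_L2 hf hf
  have iEf : Integrable (fun ω => (μ[f|m]) ω * f ω) μ := int_mul_of_L2 hE2 hf
  have iEE : Integrable (fun ω => (μ[f|m]) ω * (μ[f|m]) ω) μ := int_mul_of_L2 hE2 hE2
  have hortho : ∫ ω, (μ[f|m]) ω * (f ω - (μ[f|m]) ω) ∂μ = 0 :=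
    ortho hm hf stronglyMeasurable_condExp hE2
  have hsplit : ∫ ω, (μ[f|m]) ω * (f ω - (μ[f|m]) ω) ∂μ
      = (∫ ω, (μ[f|m]) ω * f ω ∂μ) - ∫ ω, (μ[f|m]) ω * (μ[f|m]) ω ∂μ := by
    simp_rw [mul_sub]
    exact integral_sub iEf iEE
  have hEfEE : ∫ ω, (μ[f|m]) ω * f ω ∂μ = ∫ ω, (μ[f|m]) ω * (μ[f|m]) ω ∂μ := by
    rw [hsplit] at hortho; linarith
  have hexp : ∀ ω, (f ω - (μ[f|m]) ω) ^ 2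
      = f ω * f ω - 2 * ((μ[f|m]) ω * f ω) + (μ[f|m]) ω * (μ[f|m]) ω := fun ω => by ring
  have hint : ∫ ω, (f ω - (μ[f|m]) ω) ^ 2 ∂μ
      = (∫ ω, f ω * f ω ∂μ) - ∫ ω, (μ[f|m]) ω * (μ[f|m]) ω ∂μ := by
    simp_rw [hexp]
    have j1 : Integrable (fun ω => f ω * f ω - 2 * ((μ[f|m]) ω * f ω)) μ :=
      iff2.sub (iEf.const_mul 2)
    rw [integral_add j1 iEE, integral_sub iff2 (iEf.const_mul 2),
      integral_const_mul, hEfEE]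
    ring
  have hvf : variance f μ = (∫ ω, f ω * f ω ∂μ) - (∫ ω, f ω ∂μ) ^ 2 := by
    rw [variance_eq_sub hf]
    simp only [Pi.pow_apply]
    simp_rw [sq]
  have hvE : (0:ℝ) ≤ (∫ ω, (μ[f|m]) ω * (μ[f|m]) ω ∂μ) - (∫ ω, (μ[f|m]) ω ∂μ) ^ 2 := by
    have h := variance_nonneg (μ[f|m]) μ
    rw [variance_eq_sub hE2] at h
    simp only [Pi.pow_apply] at h
    simp_rw [sq] at h ⊢
    linarith
  have hEint : ∫ ω, (μ[f|m]) ω ∂μ = ∫ ω, f ω ∂μ := integral_condExp hm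
  rw [hint, hvf]
  rw [hEint] at hvE
  linarith

set_option linter.unusedSectionVars false in
lemma memℒp_sqrt_condexp (hm : m ≤ mΩ) {g : Ω → ℝ} (hgn : 0 ≤ᵐ[μ] g) :
    MemLp (fun ω => Real.sqrt ((μ[g|m]) ω)) 2 μ := by
  haveI : SigmaFinite (μ.trim hm) := by
    have : IsFiniteMeasure (μ.trim hm) := isFiniteMeasure_trim hm
    infer_instance
  have hA_nonneg : 0 ≤ᵐ[μ] μ[g|m] := condExp_nonneg hgn
  have hmeas : AEStronglyMeasurable[mΩ] (fun ω => Real.sqrt ((μ[g|m]) ω)) μ :=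
    (Real.continuous_sqrt.comp_stronglyMeasurable
      (stronglyMeasurable_condExp.mono hm)).aestronglyMeasurable
  rw [memLp_two_iff_integrable_sq hmeas]
  refine Integrable.congr (f := μ[g|m]) integrable_condExp ?_
  filter_upwards [hA_nonneg] with ω hω
  exact (Real.sq_sqrt hω).symm

end Aux

/-- Mixing-to-covariance step: if a.s.
`|Cov(X,Y|F)| ≤ ε √Var(X|F) √Var(Y|F)` and `Cov(E[X|F],E[Y|F]) = 0`, then
`Cov(X,Y) ≤ ε √Var(X) √Var(Y)`. -/
theorem stmt6 {Ω : Type*} {mΩ : MeasurableSpace Ω} (μ : Measure Ω) [IsProbabilityMeasure μ]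
    {m : MeasurableSpace Ω} (hm : m ≤ mΩ)
    (X Y : Ω → ℝ) (hX : MemLp X 2 μ) (hY : MemLp Y 2 μ)
    (ε : ℝ) (hε : 0 ≤ ε)
    (hcond : ∀ᵐ ω ∂μ,
      |(μ[fun ω' => X ω' * Y ω'|m]) ω - (μ[X|m]) ω * (μ[Y|m]) ω|
        ≤ ε * Real.sqrt ((μ[fun ω' => (X ω' - (μ[X|m]) ω') ^ 2|m]) ω)
            * Real.sqrt ((μ[fun ω' => (Y ω' - (μ[Y|m]) ω') ^ 2|m]) ω))
    (hzero : @cov Ω mΩ μ (μ[X|m]) (μ[Y|m]) = 0) :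
    @cov Ω mΩ μ X Y ≤ ε * Real.sqrt (variance X μ) * Real.sqrt (variance Y μ) := by
  haveI : SigmaFinite (μ.trim hm) := by
    have : IsFiniteMeasure (μ.trim hm) := isFiniteMeasure_trim hm
    infer_instance
  set A : Ω → ℝ := μ[fun ω' => (X ω' - (μ[X|m]) ω') ^ 2|m] with hA
  set B : Ω → ℝ := μ[fun ω' => (Y ω' - (μ[Y|m]) ω') ^ 2|m] with hB
  have hEX2 : MemLp (μ[X|m]) 2 μ := memℒp_condexp_two hm hX
  have hEY2 : MemLp (μ[Y|m]) 2 μ := memℒp_condexp_two hm hY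
  have iXY : Integrable (fun ω => X ω * Y ω) μ := int_mul_of_L2 hX hY
  have iEXEY : Integrable (fun ω => (μ[X|m]) ω * (μ[Y|m]) ω) μ := int_mul_of_L2 hEX2 hEY2
  have hz' : ∫ ω, (μ[X|m]) ω * (μ[Y|m]) ω ∂μ = (∫ ω, X ω ∂μ) * ∫ ω, Y ω ∂μ := by
    have hc := cov_eq (hEX2.integrable one_le_two) (hEY2.integrable one_le_two) iEXEY
    rw [hzero] at hc
    have e1 : ∫ ω, (μ[X|m]) ω ∂μ = ∫ ω, X ω ∂μ := integral_condExp hm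
    have e2 : ∫ ω, (μ[Y|m]) ω ∂μ = ∫ ω, Y ω ∂μ := integral_condExp hm
    rw [e1, e2] at hc
    linarith
  have hcovXY : @cov Ω mΩ μ X Y
      = ∫ ω, ((μ[fun ω' => X ω' * Y ω'|m]) ω - (μ[X|m]) ω * (μ[Y|m]) ω) ∂μ := by
    rw [cov_eq (hX.integrable one_le_two) (hY.integrable one_le_two) iXY,
      integral_sub integrable_condExp iEXEY]
    have e3 : ∫ ω, (μ[fun ω' => X ω' * Y ω'|m]) ω ∂μ = ∫ ω, X ω * Y ω ∂μ :=
      integral_condExp hm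
    rw [e3, hz']
  have hAn : 0 ≤ᵐ[μ] A := condExp_nonneg (Filter.Eventually.of_forall fun ω => sq_nonneg _)
  have hBn : 0 ≤ᵐ[μ] B := condExp_nonneg (Filter.Eventually.of_forall fun ω => sq_nonneg _)
  have hsA : MemLp (fun ω => Real.sqrt (A ω)) 2 μ :=
    memℒp_sqrt_condexp hm (Filter.Eventually.of_forall fun ω => sq_nonneg _)
  have hsB : MemLp (fun ω => Real.sqrt (B ω)) 2 μ :=
    memℒp_sqrt_condexp hm (Filter.Eventually.of_forall fun ω => sq_nonneg _)
  have iAB : Integrable (fun ω => Real.sqrt (A ω) * Real.sqrt (B ω)) μ := int_mul_of_L2 hsA hsB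
  have step1 : @cov Ω mΩ μ X Y ≤ ε * ∫ ω, Real.sqrt (A ω) * Real.sqrt (B ω) ∂μ := by
    rw [hcovXY, ← integral_const_mul]
    refine integral_mono_ae (integrable_condExp.sub iEXEY) (iAB.const_mul ε) ?_
    filter_upwards [hcond] with ω hω
    calc (μ[fun ω' => X ω' * Y ω'|m]) ω - (μ[X|m]) ω * (μ[Y|m]) ω
        ≤ |(μ[fun ω' => X ω' * Y ω'|m]) ω - (μ[X|m]) ω * (μ[Y|m]) ω| := le_abs_self _
      _ ≤ ε * Real.sqrt (A ω) * Real.sqrt (B ω) := hω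
      _ = ε * (Real.sqrt (A ω) * Real.sqrt (B ω)) := by ring
  have hconj : Real.HolderConjugate 2 2 := Real.HolderConjugate.two_two
  have h2 : ENNReal.ofReal (2:ℝ) = 2 := by norm_num
  have holder : ∫ ω, Real.sqrt (A ω) * Real.sqrt (B ω) ∂μ
      ≤ (∫ ω, Real.sqrt (A ω) ^ (2:ℝ) ∂μ) ^ ((1:ℝ)/2)
        * (∫ ω, Real.sqrt (B ω) ^ (2:ℝ) ∂μ) ^ ((1:ℝ)/2) := by
    have := integral_mul_le_Lp_mul_Lq_of_nonneg hconj
      (Filter.Eventually.of_forall fun ω => Real.sqrt_nonneg (A ω))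
      (Filter.Eventually.of_forall fun ω => Real.sqrt_nonneg (B ω))
      (h2 ▸ hsA) (h2 ▸ hsB)
    simpa using this
  have hsqA : ∫ ω, Real.sqrt (A ω) ^ (2:ℝ) ∂μ = ∫ ω, A ω ∂μ := by
    refine integral_congr_ae ?_
    filter_upwards [hAn] with ω hω
    rw [show (2:ℝ) = ((2:ℕ):ℝ) by norm_num, Real.rpow_natCast, Real.sq_sqrt hω]
  have hsqB : ∫ ω, Real.sqrt (B ω) ^ (2:ℝ) ∂μ = ∫ ω, B ω ∂μ := by
    refine integral_congr_ae ?_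
    filter_upwards [hBn] with ω hω
    rw [show (2:ℝ) = ((2:ℕ):ℝ) by norm_num, Real.rpow_natCast, Real.sq_sqrt hω]
  have hIA : ∫ ω, A ω ∂μ = ∫ ω, (X ω - (μ[X|m]) ω) ^ 2 ∂μ := integral_condExp hm
  have hIB : ∫ ω, B ω ∂μ = ∫ ω, (Y ω - (μ[Y|m]) ω) ^ 2 ∂μ := integral_condExp hm
  have hIA_le : ∫ ω, A ω ∂μ ≤ variance X μ := hIA ▸ int_sq_sub_condexp_le hm hX
  have hIB_le : ∫ ω, B ω ∂μ ≤ variance Y μ := hIB ▸ int_sq_sub_condexp_le hm hY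
  have hIA_nonneg : 0 ≤ ∫ ω, A ω ∂μ := integral_nonneg_of_ae hAn
  have hIB_nonneg : 0 ≤ ∫ ω, B ω ∂μ := integral_nonneg_of_ae hBn
  have hrw : ∀ c : ℝ, 0 ≤ c → c ^ ((1:ℝ)/2) = Real.sqrt c := fun c hc => by
    rw [Real.sqrt_eq_rpow]
  have step2 : ∫ ω, Real.sqrt (A ω) * Real.sqrt (B ω) ∂μ
      ≤ Real.sqrt (variance X μ) * Real.sqrt (variance Y μ) := by
    refine holder.trans ?_
    rw [hsqA, hsqB, hrw _ hIA_nonneg, hrw _ hIB_nonneg]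
    exact mul_le_mul (Real.sqrt_le_sqrt hIA_le) (Real.sqrt_le_sqrt hIB_le)
      (Real.sqrt_nonneg _) (Real.sqrt_nonneg _)
  calc @cov Ω mΩ μ X Y ≤ ε * ∫ ω, Real.sqrt (A ω) * Real.sqrt (B ω) ∂μ := step1
    _ ≤ ε * (Real.sqrt (variance X μ) * Real.sqrt (variance Y μ)) :=
        mul_le_mul_of_nonneg_left step2 hε
    _ = ε * Real.sqrt (variance X μ) * Real.sqrt (variance Y μ) := by ring
end

section
/- Let (U_j)_{j=1}^{m} and (V_k)_{k=1}^{m} be square-integrable random variables, and suppose there exist constants a > 0, b > 0, ρ ∈ (0,1) and p ≥ 1 such that Var(U_j)^{1/2} ≤ a·ρ^j, Var(V_k)^{1/2} ≤ b·k^p for all j,k, and Cov(U_j, V_k) ≤ (k−j)^{−(p+2)} Var(U_j)^{1/2} Var(V_k)^{1/2} whenever k ≥ j+1. Then the double sum Σ_{j=1}^m Σ_{k=1}^m Cov(U_j, V_k) is bounded above by a constant C(a,b,ρ,p) independent of m. -/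
open MeasureTheory ProbabilityTheory Finset

lemma cov_le_sqrt {Ω : Type} [MeasurableSpace Ω] (μ : Measure Ω) [IsProbabilityMeasure μ]
    (U V : Ω → ℝ) (hU : MemLp U 2 μ) (hV : MemLp V 2 μ) :
    cov μ U V ≤ Real.sqrt (variance U μ) * Real.sqrt (variance V μ) := by
  set f : Ω → ℝ := fun ω => U ω - ∫ x, U x ∂μ with hfdef
  set g : Ω → ℝ := fun ω => V ω - ∫ x, V x ∂μ with hgdef
  have hf : MemLp f 2 μ := hU.sub (memLp_const _)
  have hg : MemLp g 2 μ := hV.sub (memLp_const _)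
  have h2 : (ENNReal.ofReal (2:ℝ)) = 2 := by norm_num
  have hconj : (2:ℝ).HolderConjugate 2 := Real.HolderConjugate.two_two
  have hH := integral_mul_norm_le_Lp_mul_Lq (μ := μ) hconj (h2 ▸ hf) (h2 ▸ hg)
  have h1 : cov μ U V ≤ ∫ ω, ‖f ω‖ * ‖g ω‖ ∂μ := by
    rw [cov]
    calc ∫ ω, f ω * g ω ∂μ ≤ |∫ ω, f ω * g ω ∂μ| := le_abs_self _
    _ ≤ ∫ ω, ‖f ω‖ * ‖g ω‖ ∂μ := by
        simpa [Real.norm_eq_abs, abs_mul] using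
          norm_integral_le_integral_norm (μ := μ) (fun ω => f ω * g ω)
  have hvarU : (∫ ω, ‖f ω‖ ^ (2:ℝ) ∂μ) = variance U μ := by
    rw [variance_eq_integral hU.aemeasurable]
    refine integral_congr_ae (ae_of_all _ fun ω => ?_)
    simp [Real.rpow_two, Real.norm_eq_abs, sq_abs, hfdef]
  have hvarV : (∫ ω, ‖g ω‖ ^ (2:ℝ) ∂μ) = variance V μ := by
    rw [variance_eq_integral hV.aemeasurable]
    refine integral_congr_ae (ae_of_all _ fun ω => ?_)
    simp [Real.rpow_two, Real.norm_eq_abs, sq_abs, hgdef]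
  calc cov μ U V ≤ ∫ ω, ‖f ω‖ * ‖g ω‖ ∂μ := h1
  _ ≤ (∫ ω, ‖f ω‖ ^ (2:ℝ) ∂μ) ^ (1/(2:ℝ)) * (∫ ω, ‖g ω‖ ^ (2:ℝ) ∂μ) ^ (1/(2:ℝ)) := hH
  _ = Real.sqrt (variance U μ) * Real.sqrt (variance V μ) := by
      rw [hvarU, hvarV, Real.sqrt_eq_rpow, Real.sqrt_eq_rpow]

/-- Summation scheme: if `√Var(U_j) ≤ a·ρ^j`, `√Var(V_k) ≤ b·k^p`, and for k ≥ j+1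
`Cov(U_j, V_k) ≤ (k−j)^{−(p+2)} √Var(U_j) √Var(V_k)`, then
`∑_{j=1}^m ∑_{k=1}^m Cov(U_j, V_k)` is bounded by a constant depending only on
a, b, ρ, p (independent of m). -/
theorem stmt19 (a b ρ p : ℝ) (ha : 0 < a) (hb : 0 < b) (hρ0 : 0 < ρ) (hρ1 : ρ < 1)
    (hp : 1 ≤ p) :
    ∃ C : ℝ, ∀ (Ω : Type) (_ : MeasurableSpace Ω) (μ : Measure Ω),
      IsProbabilityMeasure μ →
      ∀ (m : ℕ) (U V : ℕ → Ω → ℝ),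
        (∀ j, MemLp (U j) 2 μ) → (∀ k, MemLp (V k) 2 μ) →
        (∀ j ∈ Finset.Icc 1 m, Real.sqrt (variance (U j) μ) ≤ a * ρ ^ j) →
        (∀ k ∈ Finset.Icc 1 m, Real.sqrt (variance (V k) μ) ≤ b * (k : ℝ) ^ p) →
        (∀ j k : ℕ, 1 ≤ j → j + 1 ≤ k → k ≤ m →
          cov μ (U j) (V k)
            ≤ ((k : ℝ) - (j : ℝ)) ^ (-(p + 2)) * Real.sqrt (variance (U j) μ)
                * Real.sqrt (variance (V k) μ)) →
        ∑ j ∈ Finset.Icc 1 m, ∑ k ∈ Finset.Icc 1 m, cov μ (U j) (V k) ≤ C := by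
  classical
  set N : ℕ := ⌈p⌉₊ with hNdef
  have hpN : p ≤ (N : ℝ) := Nat.le_ceil p
  have hp0 : 0 ≤ p := le_trans zero_le_one hp
  -- summability facts
  have hρnorm : ‖ρ‖ < 1 := by rw [Real.norm_eq_abs, abs_of_pos hρ0]; exact hρ1
  have hsumT : Summable (fun n : ℕ => (n : ℝ) ^ (N + 1) * ρ ^ n) :=
    summable_pow_mul_geometric_of_norm_lt_one (N + 1) hρnorm
  set T : ℝ := ∑' n : ℕ, (n : ℝ) ^ (N + 1) * ρ ^ n with hTdef
  have hTterm : ∀ n : ℕ, 0 ≤ (n : ℝ) ^ (N + 1) * ρ ^ n := fun n => by positivity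
  have hsumK : Summable (fun d : ℕ => (d : ℝ) ^ (-2 : ℝ)) :=
    Real.summable_nat_rpow.mpr (by norm_num)
  set K : ℝ := ∑' d : ℕ, (d : ℝ) ^ (-2 : ℝ) with hKdef
  have hKterm : ∀ d : ℕ, 0 ≤ (d : ℝ) ^ (-2 : ℝ) := fun d =>
    Real.rpow_nonneg (Nat.cast_nonneg d) _
  have hK0 : 0 ≤ K := tsum_nonneg hKterm
  set coef : ℝ := a * b + a * b * 2 ^ (p + 1) * K with hcoefdef
  have hcoef0 : 0 ≤ coef := by
    have h1 : (0:ℝ) ≤ a * b := by positivity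
    have h2 : (0:ℝ) ≤ a * b * 2 ^ (p + 1) := by positivity
    exact add_nonneg h1 (mul_nonneg h2 hK0)
  refine ⟨coef * T, ?_⟩
  intro Ω _ μ hμ m U V hU hV hUvar hVvar hcov
  -- Row bound
  have hrow : ∀ j ∈ Finset.Icc 1 m,
      ∑ k ∈ Finset.Icc 1 m, cov μ (U j) (V k) ≤ coef * ((j : ℝ) ^ (N + 1) * ρ ^ j) := by
    intro j hj
    obtain ⟨hj1, hjm⟩ := Finset.mem_Icc.mp hj
    have hj1R : (1 : ℝ) ≤ (j : ℝ) := by exact_mod_cast hj1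
    have hρj : (0 : ℝ) < ρ ^ j := pow_pos hρ0 j
    -- split the sum
    have hsplit : ∑ k ∈ Finset.Icc 1 m, cov μ (U j) (V k)
        = (∑ k ∈ Finset.Ioc 0 j, cov μ (U j) (V k))
          + ∑ k ∈ Finset.Ioc j m, cov μ (U j) (V k) := by
      rw [show Finset.Icc 1 m = Finset.Ioc 0 m from by ext x; simp; omega]
      exact (Finset.sum_Ioc_consecutive _ (Nat.zero_le j) hjm).symm
    -- Part 1 : k ≤ j
    have hpart1 : ∑ k ∈ Finset.Ioc 0 j, cov μ (U j) (V k)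
        ≤ a * b * ((j : ℝ) ^ (N + 1) * ρ ^ j) := by
      have hterm : ∀ k ∈ Finset.Ioc 0 j,
          cov μ (U j) (V k) ≤ a * ρ ^ j * (b * (j : ℝ) ^ N) := by
        intro k hk
        obtain ⟨hk0, hkj⟩ := Finset.mem_Ioc.mp hk
        have hkIcc : k ∈ Finset.Icc 1 m := Finset.mem_Icc.mpr ⟨hk0, le_trans hkj hjm⟩
        have h1 := cov_le_sqrt μ (U j) (V k) (hU j) (hV k)
        have h2 : Real.sqrt (variance (U j) μ) * Real.sqrt (variance (V k) μ)
            ≤ (a * ρ ^ j) * (b * (k : ℝ) ^ p) := by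
          refine mul_le_mul (hUvar j hj) (hVvar k hkIcc) (Real.sqrt_nonneg _) ?_
          positivity
        have h3 : (k : ℝ) ^ p ≤ (j : ℝ) ^ N := by
          calc (k : ℝ) ^ p ≤ (j : ℝ) ^ p :=
                Real.rpow_le_rpow (Nat.cast_nonneg k) (by exact_mod_cast hkj) hp0
          _ ≤ (j : ℝ) ^ (N : ℝ) := Real.rpow_le_rpow_of_exponent_le hj1R hpN
          _ = (j : ℝ) ^ N := Real.rpow_natCast _ N
        calc cov μ (U j) (V k) ≤ _ := h1
        _ ≤ (a * ρ ^ j) * (b * (k : ℝ) ^ p) := h2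
        _ ≤ (a * ρ ^ j) * (b * (j : ℝ) ^ N) := by gcongr
      calc ∑ k ∈ Finset.Ioc 0 j, cov μ (U j) (V k)
          ≤ (Finset.Ioc 0 j).card • (a * ρ ^ j * (b * (j : ℝ) ^ N)) :=
            Finset.sum_le_card_nsmul _ _ _ hterm
      _ = (j : ℝ) * (a * ρ ^ j * (b * (j : ℝ) ^ N)) := by
            rw [Nat.card_Ioc, nsmul_eq_mul]; norm_num
      _ = a * b * (((j : ℝ) ^ N * (j : ℝ)) * ρ ^ j) := by ring
      _ = a * b * ((j : ℝ) ^ (N + 1) * ρ ^ j) := by rw [← pow_succ]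
    -- Part 2 : k ≥ j + 1
    have hpart2 : ∑ k ∈ Finset.Ioc j m, cov μ (U j) (V k)
        ≤ a * b * 2 ^ p * ρ ^ j * ((j : ℝ) ^ N + 1) * K := by
      set c : ℝ := a * b * 2 ^ p * ρ ^ j * ((j : ℝ) ^ N + 1) with hcdef
      have hc0 : 0 ≤ c := by positivity
      have hterm : ∀ k ∈ Finset.Ioc j m,
          cov μ (U j) (V k) ≤ c * ((k - j : ℕ) : ℝ) ^ (-2 : ℝ) := by
        intro k hk
        obtain ⟨hjk, hkm⟩ := Finset.mem_Ioc.mp hk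
        have hkIcc : k ∈ Finset.Icc 1 m :=
          Finset.mem_Icc.mpr ⟨le_trans hj1 (le_of_lt hjk), hkm⟩
        set d : ℝ := ((k - j : ℕ) : ℝ) with hddef
        have hd1 : (1 : ℝ) ≤ d := by
          rw [hddef]; exact_mod_cast Nat.one_le_iff_ne_zero.mpr (by omega)
        have hd0 : (0 : ℝ) < d := lt_of_lt_of_le zero_lt_one hd1
        have hDd : (k : ℝ) - (j : ℝ) = d := by
          rw [hddef, Nat.cast_sub (le_of_lt hjk)]
        have hkd : (k : ℝ) = (j : ℝ) + d := by rw [← hDd]; ring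
        -- k^p ≤ 2^p (j^p + d^p)
        have hkp : (k : ℝ) ^ p ≤ 2 ^ p * ((j : ℝ) ^ p + d ^ p) := by
          have hmax : (k : ℝ) ≤ 2 * max (j : ℝ) d := by
            rw [hkd, two_mul]
            exact add_le_add (le_max_left _ _) (le_max_right _ _)
          have hmaxp : (max (j : ℝ) d) ^ p ≤ (j : ℝ) ^ p + d ^ p := by
            rcases max_cases (j : ℝ) d with ⟨h, _⟩ | ⟨h, _⟩
            · rw [h]; exact le_add_of_nonneg_right (Real.rpow_nonneg (le_of_lt hd0) _)
            · rw [h]; exact le_add_of_nonneg_left (Real.rpow_nonneg (Nat.cast_nonneg j) _)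
          calc (k : ℝ) ^ p ≤ (2 * max (j : ℝ) d) ^ p :=
                Real.rpow_le_rpow (Nat.cast_nonneg k) hmax hp0
          _ = 2 ^ p * (max (j : ℝ) d) ^ p :=
                Real.mul_rpow (by norm_num) (le_trans (Nat.cast_nonneg j) (le_max_left _ _))
          _ ≤ 2 ^ p * ((j : ℝ) ^ p + d ^ p) := by gcongr
        have hdpq : d ^ (-(p + 2)) * d ^ p = d ^ (-2 : ℝ) := by
          rw [← Real.rpow_add hd0]; norm_num
        have hdle : d ^ (-(p + 2)) ≤ d ^ (-2 : ℝ) :=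
          Real.rpow_le_rpow_of_exponent_le hd1 (by linarith)
        have hjpN : (j : ℝ) ^ p ≤ (j : ℝ) ^ N := by
          calc (j : ℝ) ^ p ≤ (j : ℝ) ^ (N : ℝ) := Real.rpow_le_rpow_of_exponent_le hj1R hpN
          _ = (j : ℝ) ^ N := Real.rpow_natCast _ N
        have h1 := hcov j k hj1 hjk hkm
        rw [hDd] at h1
        have h2 : d ^ (-(p + 2)) * Real.sqrt (variance (U j) μ) * Real.sqrt (variance (V k) μ)
            ≤ d ^ (-(p + 2)) * (a * ρ ^ j) * (b * (k : ℝ) ^ p) := by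
          have hrp : (0:ℝ) ≤ d ^ (-(p + 2)) := Real.rpow_nonneg (le_of_lt hd0) _
          refine mul_le_mul (mul_le_mul_of_nonneg_left (hUvar j hj) hrp)
            (hVvar k hkIcc) (Real.sqrt_nonneg _) (mul_nonneg hrp (by positivity))
        calc cov μ (U j) (V k) ≤ _ := h1
        _ ≤ d ^ (-(p + 2)) * (a * ρ ^ j) * (b * (k : ℝ) ^ p) := h2
        _ ≤ d ^ (-(p + 2)) * (a * ρ ^ j) * (b * (2 ^ p * ((j : ℝ) ^ p + d ^ p))) := by
            have hrp : (0:ℝ) ≤ d ^ (-(p + 2)) := Real.rpow_nonneg (le_of_lt hd0) _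
            gcongr
        _ = a * b * 2 ^ p * ρ ^ j * ((j : ℝ) ^ p * d ^ (-(p + 2)) + d ^ (-(p + 2)) * d ^ p) := by
            ring
        _ ≤ a * b * 2 ^ p * ρ ^ j * ((j : ℝ) ^ N * d ^ (-2 : ℝ) + d ^ (-2 : ℝ)) := by
            rw [hdpq]
            have hb1 : (j : ℝ) ^ p * d ^ (-(p + 2)) ≤ (j : ℝ) ^ N * d ^ (-2 : ℝ) := by
              refine mul_le_mul hjpN hdle (Real.rpow_nonneg (le_of_lt hd0) _) ?_
              positivity
            gcongr
        _ = c * d ^ (-2 : ℝ) := by rw [hcdef]; ring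
      have hsum2 : ∑ k ∈ Finset.Ioc j m, ((k - j : ℕ) : ℝ) ^ (-2 : ℝ) ≤ K := by
        have himg : ∑ k ∈ Finset.Ioc j m, ((k - j : ℕ) : ℝ) ^ (-2 : ℝ)
            = ∑ d ∈ (Finset.Ioc j m).image (· - j), (d : ℝ) ^ (-2 : ℝ) := by
          rw [Finset.sum_image]
          intro x hx y hy hxy
          have hx' := Finset.mem_Ioc.mp hx
          have hy' := Finset.mem_Ioc.mp hy
          simp only at hxy
          omega
        rw [himg]
        exact Summable.sum_le_tsum _ (fun i _ => hKterm i) hsumK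
      calc ∑ k ∈ Finset.Ioc j m, cov μ (U j) (V k)
          ≤ ∑ k ∈ Finset.Ioc j m, c * ((k - j : ℕ) : ℝ) ^ (-2 : ℝ) :=
            Finset.sum_le_sum hterm
      _ = c * ∑ k ∈ Finset.Ioc j m, ((k - j : ℕ) : ℝ) ^ (-2 : ℝ) := by
            rw [Finset.mul_sum]
      _ ≤ c * K := mul_le_mul_of_nonneg_left hsum2 hc0
    -- combine parts
    have hNle : (j : ℝ) ^ N + 1 ≤ 2 * (j : ℝ) ^ (N + 1) := by
      have h1 : (j : ℝ) ^ N ≤ (j : ℝ) ^ (N + 1) :=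
        pow_le_pow_right₀ hj1R (Nat.le_succ N)
      have h2 : (1 : ℝ) ≤ (j : ℝ) ^ (N + 1) := one_le_pow₀ hj1R
      linarith
    have hpart2' : a * b * 2 ^ p * ρ ^ j * ((j : ℝ) ^ N + 1) * K
        ≤ a * b * 2 ^ (p + 1) * K * ((j : ℝ) ^ (N + 1) * ρ ^ j) := by
      have h1 : a * b * 2 ^ p * ρ ^ j * ((j : ℝ) ^ N + 1)
          ≤ a * b * 2 ^ p * ρ ^ j * (2 * (j : ℝ) ^ (N + 1)) := by gcongr
      have h2 : a * b * 2 ^ p * ρ ^ j * (2 * (j : ℝ) ^ (N + 1))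
          = a * b * 2 ^ (p + 1) * ((j : ℝ) ^ (N + 1) * ρ ^ j) := by
        rw [Real.rpow_add (by norm_num : (0:ℝ) < 2), Real.rpow_one]; ring
      calc a * b * 2 ^ p * ρ ^ j * ((j : ℝ) ^ N + 1) * K
          ≤ a * b * 2 ^ p * ρ ^ j * (2 * (j : ℝ) ^ (N + 1)) * K :=
            mul_le_mul_of_nonneg_right h1 hK0
      _ = a * b * 2 ^ (p + 1) * K * ((j : ℝ) ^ (N + 1) * ρ ^ j) := by rw [h2]; ring
    rw [hsplit, hcoefdef]
    calc (∑ k ∈ Finset.Ioc 0 j, cov μ (U j) (V k)) + ∑ k ∈ Finset.Ioc j m, cov μ (U j) (V k)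
        ≤ a * b * ((j : ℝ) ^ (N + 1) * ρ ^ j)
          + a * b * 2 ^ (p + 1) * K * ((j : ℝ) ^ (N + 1) * ρ ^ j) :=
          add_le_add hpart1 (le_trans hpart2 hpart2')
    _ = (a * b + a * b * 2 ^ (p + 1) * K) * ((j : ℝ) ^ (N + 1) * ρ ^ j) := by ring
  -- sum the rows
  calc ∑ j ∈ Finset.Icc 1 m, ∑ k ∈ Finset.Icc 1 m, cov μ (U j) (V k)
      ≤ ∑ j ∈ Finset.Icc 1 m, coef * ((j : ℝ) ^ (N + 1) * ρ ^ j) := Finset.sum_le_sum hrow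
  _ = coef * ∑ j ∈ Finset.Icc 1 m, (j : ℝ) ^ (N + 1) * ρ ^ j := by rw [Finset.mul_sum]
  _ ≤ coef * T :=
      mul_le_mul_of_nonneg_left
        (Summable.sum_le_tsum _ (fun i _ => hTterm i) hsumT) hcoef0
end
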